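/- Let ρ₁ = ρ₂ = 1 and μ₁, μ₂ > 0. If either (μ₁μ₂ > 1, R₁ < 0, and S₃ > 0) or (μ₁μ₂ > 1, R₁ > 0, and S₃ < 0), then the set of stable positive equilibria of Kopel's model has exactly one element, where a positive equilibrium (x,y) is stable if every complex eigenvalue λ of the Jacobian matrix J(x,y), which (for ρ₁ = ρ₂ = 1) has rows (0, μ₁(1−2y)) and (μ₂(1−2x), 0), satisfies |λ| < 1. -/

import Mathlib

/-- The cubic whose roots in `(0,1)` are the `x`-coordinates of positive equilibria. -/
private noncomputable def kopelG (μ₁ μ₂ x : ℝ) : ℝ :=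
  μ₁ * μ₂ * (1 - x) * (μ₂ * x ^ 2 - μ₂ * x + 1) - 1

/-- The derivative of `kopelG` in `x`. -/
private noncomputable def kopelP (μ₁ μ₂ x : ℝ) : ℝ :=
  -3 * μ₁ * μ₂ ^ 2 * x ^ 2 + 4 * μ₁ * μ₂ ^ 2 * x - μ₁ * μ₂ * (μ₂ + 1)

/-- Product of the two Jacobian eigen-entries at the equilibrium with abscissa `x`. -/
private noncomputable def kopelH (μ₁ μ₂ x : ℝ) : ℝ :=
  μ₁ * μ₂ * (1 - 2 * x) * (2 * μ₂ * x ^ 2 - 2 * μ₂ * x + 1)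

private lemma kopelH_root {μ₁ μ₂ x : ℝ} (hx : kopelG μ₁ μ₂ x = 0) :
    kopelH μ₁ μ₂ x = x * kopelP μ₁ μ₂ x + 1 := by
  simp only [kopelG] at hx
  simp only [kopelH, kopelP]
  linear_combination hx

private lemma kopel_root_bounds {μ₁ μ₂ x : ℝ} (hμ₁ : 0 < μ₁) (hμ₂ : 0 < μ₂)
    (hmm : 1 < μ₁ * μ₂) (hx : kopelG μ₁ μ₂ x = 0) : 0 < x ∧ x < 1 := by
  simp only [kopelG] at hx
  constructor
  · by_contra hle
    push_neg at hle
    have hq : 1 ≤ μ₂ * x ^ 2 - μ₂ * x + 1 := by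
      nlinarith [mul_nonneg hμ₂.le (sq_nonneg x), mul_nonneg hμ₂.le (neg_nonneg.2 hle)]
    have h1x : 1 ≤ 1 - x := by linarith
    have hgt : 1 ≤ (1 - x) * (μ₂ * x ^ 2 - μ₂ * x + 1) := by nlinarith
    nlinarith [mul_pos hμ₁ hμ₂]
  · by_contra hge
    push_neg at hge
    have hq : 1 ≤ μ₂ * x ^ 2 - μ₂ * x + 1 := by
      nlinarith [mul_nonneg hμ₂.le (mul_nonneg (by linarith : (0:ℝ) ≤ x) (by linarith : (0:ℝ) ≤ x - 1))]
    have h1x : 1 - x ≤ 0 := by linarith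
    nlinarith [mul_pos hμ₁ hμ₂, mul_nonneg (mul_pos hμ₁ hμ₂).le (by linarith : (0:ℝ) ≤ x - 1)]

private lemma kopel_stable_of {μ₁ μ₂ x : ℝ} (hx : kopelG μ₁ μ₂ x = 0)
    (h0 : 0 < x) (hd : kopelP μ₁ μ₂ x < 0) (hψ : 0 < x * kopelP μ₁ μ₂ x + 2) :
    |kopelH μ₁ μ₂ x| < 1 := by
  rw [kopelH_root hx, abs_lt]
  constructor
  · linarith
  · nlinarith

/-- Case of three distinct real roots `u < w < v` of the cubic: if the product of the
three stability quantities is negative, exactly one root is stable. -/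
private lemma kopel_helperB {μ₁ μ₂ u w v : ℝ} (hμ₁ : 0 < μ₁) (hμ₂ : 0 < μ₂)
    (hmm : 1 < μ₁ * μ₂)
    (hu : kopelG μ₁ μ₂ u = 0) (hw : kopelG μ₁ μ₂ w = 0) (hv : kopelG μ₁ μ₂ v = 0)
    (huw : u < w) (hwv : w < v)
    (hdu : kopelP μ₁ μ₂ u = -(μ₁ * μ₂ ^ 2) * ((u - w) * (u - v)))
    (hdw : kopelP μ₁ μ₂ w = -(μ₁ * μ₂ ^ 2) * ((w - u) * (w - v)))
    (hdv : kopelP μ₁ μ₂ v = -(μ₁ * μ₂ ^ 2) * ((v - u) * (v - w)))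
    (hroots : ∀ x, kopelG μ₁ μ₂ x = 0 → x = u ∨ x = w ∨ x = v)
    (hprodneg : (u * kopelP μ₁ μ₂ u + 2) *
      ((w * kopelP μ₁ μ₂ w + 2) * (v * kopelP μ₁ μ₂ v + 2)) < 0) :
    ∃ x₀, ∀ x, (kopelG μ₁ μ₂ x = 0 ∧ |kopelH μ₁ μ₂ x| < 1) ↔ x = x₀ := by
  have hM : 0 < μ₁ * μ₂ ^ 2 := by positivity
  obtain ⟨hu0, hu1⟩ := kopel_root_bounds hμ₁ hμ₂ hmm hu
  obtain ⟨hw0, hw1⟩ := kopel_root_bounds hμ₁ hμ₂ hmm hw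
  obtain ⟨hv0, hv1⟩ := kopel_root_bounds hμ₁ hμ₂ hmm hv
  have hdwpos : 0 < kopelP μ₁ μ₂ w := by
    rw [hdw]
    nlinarith [mul_pos hM (mul_pos (sub_pos.2 huw) (sub_pos.2 hwv))]
  have hduneg : kopelP μ₁ μ₂ u < 0 := by
    rw [hdu]
    nlinarith [mul_pos hM (mul_pos (sub_pos.2 huw) (sub_pos.2 (huw.trans hwv)))]
  have hdvneg : kopelP μ₁ μ₂ v < 0 := by
    rw [hdv]
    nlinarith [mul_pos hM (mul_pos (sub_pos.2 (huw.trans hwv)) (sub_pos.2 hwv))]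
  have hψw : 2 < w * kopelP μ₁ μ₂ w + 2 := by nlinarith
  have hψuv : (u * kopelP μ₁ μ₂ u + 2) * (v * kopelP μ₁ μ₂ v + 2) < 0 := by nlinarith
  -- the middle root is never stable
  have hwunst : ¬ |kopelH μ₁ μ₂ w| < 1 := by
    rw [kopelH_root hw, abs_lt]
    intro ⟨_, h2⟩; linarith
  rcases lt_or_gt_of_ne (fun h0 : u * kopelP μ₁ μ₂ u + 2 = 0 => by
      rw [h0] at hψuv; simp at hψuv : u * kopelP μ₁ μ₂ u + 2 ≠ 0) with hψu | hψu
  · -- ψ u < 0 : the stable root is v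
    have hψv : 0 < v * kopelP μ₁ μ₂ v + 2 := by nlinarith
    refine ⟨v, fun x => ⟨fun ⟨hgx, hsx⟩ => ?_, fun hx => ?_⟩⟩
    · rcases hroots x hgx with rfl | rfl | rfl
      · rw [kopelH_root hu, abs_lt] at hsx; linarith [hsx.1]
      · exact absurd hsx hwunst
      · rfl
    · subst hx
      exact ⟨hv, kopel_stable_of hv hv0 hdvneg hψv⟩
  · -- ψ u > 0 : the stable root is u
    have hψv : v * kopelP μ₁ μ₂ v + 2 < 0 := by nlinarith
    refine ⟨u, fun x => ⟨fun ⟨hgx, hsx⟩ => ?_, fun hx => ?_⟩⟩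
    · rcases hroots x hgx with rfl | rfl | rfl
      · rfl
      · exact absurd hsx hwunst
      · rw [kopelH_root hv, abs_lt] at hsx; linarith [hsx.1]
    · subst hx
      exact ⟨hu, kopel_stable_of hu hu0 hduneg hψu⟩

private lemma aux_discneg {D P K R : ℝ} (hK : 0 < K) (hI : D * P ^ 2 = K * R) (hR : R < 0) :
    D < 0 := by
  by_contra hn
  push_neg at hn
  have h1 : K * R < 0 := mul_neg_of_pos_of_neg hK hR
  nlinarith [mul_nonneg hn (sq_nonneg P)]

private lemma aux_discpos {D P K R : ℝ} (hK : 0 < K) (hI : D * P ^ 2 = K * R) (hR : 0 < R) :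
    0 < D ∧ P ≠ 0 := by
  have hP : P ≠ 0 := by
    rintro rfl
    simp at hI
    rcases hI with h | h <;> nlinarith
  refine ⟨?_, hP⟩
  have hp2 : 0 < P ^ 2 := lt_of_le_of_ne (sq_nonneg P) (Ne.symm (pow_ne_zero 2 hP))
  by_contra hn
  push_neg at hn
  nlinarith [mul_pos hK hR, mul_nonneg (neg_nonneg.2 hn) hp2.le]

private lemma aux_neg {A P T D : ℝ} (hA : A < 0) (h4 : 4 * A * P = T ^ 2 - D) (hD : D < 0) :
    P < 0 := by nlinarith [sq_nonneg T]

private lemma aux_caseA {A V al D T ψ K S : ℝ} (hA : A < 0)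
    (h5 : 4 * A * V = al ^ 2 * (-D) + T ^ 2) (hD : D < 0)
    (hI : ψ * V = -K * S) (hK : 0 < K) (hS : 0 < S) : 0 < ψ := by
  have hVle : V ≤ 0 := by
    nlinarith [sq_nonneg T, mul_nonneg (sq_nonneg al) (neg_nonneg.2 hD.le)]
  have hV : V < 0 := by
    rcases lt_or_eq_of_le hVle with hlt | heq
    · exact hlt
    · exfalso
      rw [heq, mul_zero] at hI
      nlinarith [mul_pos hK hS]
  by_contra hn
  push_neg at hn
  nlinarith [mul_nonneg (neg_nonneg.2 hn) (neg_nonneg.2 hV.le), mul_pos hK hS]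

set_option maxHeartbeats 1600000 in
private lemma kopel_key (μ₁ μ₂ : ℝ) (hμ₁ : 0 < μ₁) (hμ₂ : 0 < μ₂)
    (h : (1 < μ₁ * μ₂ ∧ (μ₁ ^ 2 * μ₂ ^ 2 - 4 * μ₁ ^ 2 * μ₂ - 4 * μ₁ * μ₂ ^ 2 + 18 * μ₁ * μ₂ - 27) < 0 ∧ 0 < (μ₁ ^ 3 * μ₂ ^ 3 - 4 * μ₁ ^ 3 * μ₂ ^ 2 - 4 * μ₁ ^ 2 * μ₂ ^ 3 + 15 * μ₁ ^ 2 * μ₂ ^ 2 + 12 * μ₁ ^ 2 * μ₂ + 12 * μ₁ * μ₂ ^ 2 - 85 * μ₁ * μ₂ + 125)) ∨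
         (1 < μ₁ * μ₂ ∧ 0 < (μ₁ ^ 2 * μ₂ ^ 2 - 4 * μ₁ ^ 2 * μ₂ - 4 * μ₁ * μ₂ ^ 2 + 18 * μ₁ * μ₂ - 27) ∧ (μ₁ ^ 3 * μ₂ ^ 3 - 4 * μ₁ ^ 3 * μ₂ ^ 2 - 4 * μ₁ ^ 2 * μ₂ ^ 3 + 15 * μ₁ ^ 2 * μ₂ ^ 2 + 12 * μ₁ ^ 2 * μ₂ + 12 * μ₁ * μ₂ ^ 2 - 85 * μ₁ * μ₂ + 125) < 0)) :
    ∃ x₀, ∀ x, (kopelG μ₁ μ₂ x = 0 ∧ |kopelH μ₁ μ₂ x| < 1) ↔ x = x₀ := by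
  have hmm : 1 < μ₁ * μ₂ := by rcases h with ⟨h1, _, _⟩ | ⟨h1, _, _⟩ <;> exact h1
  have hM : (0:ℝ) < μ₁ * μ₂ ^ 2 := by positivity
  have hAneg : (-(μ₁ * μ₂ ^ 2)) < 0 := neg_lt_zero.2 hM
  have ha : (-(μ₁ * μ₂ ^ 2)) ≠ 0 := ne_of_lt hAneg
  -- a root of the cubic, by the intermediate value theorem
  have hcont : Continuous fun t : ℝ => kopelG μ₁ μ₂ t := by
    unfold kopelG; fun_prop
  have hg1 : kopelG μ₁ μ₂ 1 = -1 := by simp only [kopelG]; ring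
  have hg0 : kopelG μ₁ μ₂ 0 = μ₁ * μ₂ - 1 := by simp only [kopelG]; ring
  obtain ⟨r, hrmem, hgr⟩ := intermediate_value_Ioo' zero_le_one hcont.continuousOn
    (show (0:ℝ) ∈ Set.Ioo (kopelG μ₁ μ₂ 1) (kopelG μ₁ μ₂ 0) from
      ⟨by rw [hg1]; norm_num, by rw [hg0]; linarith⟩)
  have hgr : kopelG μ₁ μ₂ r = 0 := hgr
  have hr : μ₁ * μ₂ * (1 - r) * (μ₂ * r ^ 2 - μ₂ * r + 1) - 1 = 0 := by
    have := hgr; simp only [kopelG] at this; exact this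
  -- the two master certificates
  have I2 : (r * kopelP μ₁ μ₂ r + 2) * ((-9) * μ₁ ^ 7 * μ₂ ^ 14 * r ^ 6 + (42) * μ₁ ^ 7 * μ₂ ^ 14 * r ^ 5 + (-76) * μ₁ ^ 7 * μ₂ ^ 14 * r ^ 4 + (66) * μ₁ ^ 7 * μ₂ ^ 14 * r ^ 3 + (-27) * μ₁ ^ 7 * μ₂ ^ 14 * r ^ 2 + (4) * μ₁ ^ 7 * μ₂ ^ 14 * r + (-24) * μ₁ ^ 7 * μ₂ ^ 13 * r ^ 4 + (74) * μ₁ ^ 7 * μ₂ ^ 13 * r ^ 3 + (-78) * μ₁ ^ 7 * μ₂ ^ 13 * r ^ 2 + (32) * μ₁ ^ 7 * μ₂ ^ 13 * r + (-4) * μ₁ ^ 7 * μ₂ ^ 13 + (-19) * μ₁ ^ 7 * μ₂ ^ 12 * r ^ 2 + (28) * μ₁ ^ 7 * μ₂ ^ 12 * r + (-8) * μ₁ ^ 7 * μ₂ ^ 12 + (-4) * μ₁ ^ 7 * μ₂ ^ 11 + (12) * μ₁ ^ 6 * μ₂ ^ 12 * r ^ 3 + (-28) * μ₁ ^ 6 *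 μ₂ ^ 12 * r ^ 2 + (16) * μ₁ ^ 6 * μ₂ ^ 12 * r + (16) * μ₁ ^ 6 * μ₂ ^ 11 * r + (-16) * μ₁ ^ 6 * μ₂ ^ 11 + (-4) * μ₁ ^ 5 * μ₂ ^ 10) = -(μ₁ ^ 5 * μ₂ ^ 10) * (μ₁ ^ 3 * μ₂ ^ 3 - 4 * μ₁ ^ 3 * μ₂ ^ 2 - 4 * μ₁ ^ 2 * μ₂ ^ 3 + 15 * μ₁ ^ 2 * μ₂ ^ 2 + 12 * μ₁ ^ 2 * μ₂ + 12 * μ₁ * μ₂ ^ 2 - 85 * μ₁ * μ₂ + 125) := by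
    simp only [kopelP]
    linear_combination ((-27) * μ₁ ^ 7 * μ₂ ^ 14 * r ^ 6 + (108) * μ₁ ^ 7 * μ₂ ^ 14 * r ^ 5 + (-162) * μ₁ ^ 7 * μ₂ ^ 14 * r ^ 4 + (112) * μ₁ ^ 7 * μ₂ ^ 14 * r ^ 3 + (-35) * μ₁ ^ 7 * μ₂ ^ 14 * r ^ 2 + (4) * μ₁ ^ 7 * μ₂ ^ 14 * r + (-54) * μ₁ ^ 7 * μ₂ ^ 13 * r ^ 4 + (117) * μ₁ ^ 7 * μ₂ ^ 13 * r ^ 3 + (-72) * μ₁ ^ 7 * μ₂ ^ 13 * r ^ 2 + (13) * μ₁ ^ 7 * μ₂ ^ 13 * r + (-27) * μ₁ ^ 7 * μ₂ ^ 12 * r ^ 2 + (9) * μ₁ ^ 7 * μ₂ ^ 12 * r + (1) * μ₁ ^ 7 * μ₂ ^ 12 + (-4) * μ₁ ^ 7 * μ₂ ^ 11 + (81) * μ₁ ^ 6 * μ₂ ^ 12 * r ^ 3 + (-162) * μ₁ ^ 6 * μ₂ ^ 12 * r ^ 2 + (81) * μ₁ ^ 6 * μ₂ ^ 12 * r + (-12)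 * μ₁ ^ 6 * μ₂ ^ 12 + (81) * μ₁ ^ 6 * μ₂ ^ 11 * r + (-117) * μ₁ ^ 5 * μ₂ ^ 10) * hr
  have I3 : ((-3) * μ₁ ^ 2 * μ₂ ^ 4 * r ^ 2 + (4) * μ₁ ^ 2 * μ₂ ^ 4 * r + (-4) * μ₁ ^ 2 * μ₂ ^ 3) * (kopelP μ₁ μ₂ r) ^ 2 = μ₁ ^ 2 * μ₂ ^ 4 * (μ₁ ^ 2 * μ₂ ^ 2 - 4 * μ₁ ^ 2 * μ₂ - 4 * μ₁ * μ₂ ^ 2 + 18 * μ₁ * μ₂ - 27) := by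
    simp only [kopelP]
    linear_combination ((27) * μ₁ ^ 3 * μ₂ ^ 6 * r ^ 3 + (-54) * μ₁ ^ 3 * μ₂ ^ 6 * r ^ 2 + (27) * μ₁ ^ 3 * μ₂ ^ 6 * r + (-4) * μ₁ ^ 3 * μ₂ ^ 6 + (27) * μ₁ ^ 3 * μ₂ ^ 5 * r + (-9) * μ₁ ^ 3 * μ₂ ^ 5 + (-27) * μ₁ ^ 2 * μ₂ ^ 4) * hr
  have h4r : 4 * (-(μ₁ * μ₂ ^ 2)) * (kopelP μ₁ μ₂ r) = (2 * (-(μ₁ * μ₂ ^ 2)) * r + ((-1) * μ₁ * μ₂ ^ 2 * r + (2) * μ₁ * μ₂ ^ 2)) ^ 2 - ((-3) * μ₁ ^ 2 * μ₂ ^ 4 * r ^ 2 + (4) * μ₁ ^ 2 * μ₂ ^ 4 * r + (-4) * μ₁ ^ 2 * μ₂ ^ 3) := by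
    simp only [kopelP]; ring
  rcases h with ⟨-, hR, hS⟩ | ⟨-, hR, hS⟩
  · -- Case A : R₁ < 0, S₃ > 0 : unique real root, and it is stable
    have hdiscneg : ((-3) * μ₁ ^ 2 * μ₂ ^ 4 * r ^ 2 + (4) * μ₁ ^ 2 * μ₂ ^ 4 * r + (-4) * μ₁ ^ 2 * μ₂ ^ 3) < 0 := aux_discneg (by positivity) I3 hR
    have hqr : kopelP μ₁ μ₂ r < 0 := aux_neg hAneg h4r hdiscneg
    have h5 : 4 * (-(μ₁ * μ₂ ^ 2)) * ((-9) * μ₁ ^ 7 * μ₂ ^ 14 * r ^ 6 + (42) * μ₁ ^ 7 * μ₂ ^ 14 * r ^ 5 + (-76) * μ₁ ^ 7 * μ₂ ^ 14 * r ^ 4 + (66) * μ₁ ^ 7 * μ₂ ^ 14 * r ^ 3 + (-27) * μ₁ ^ 7 * μ₂ ^ 14 * r ^ 2 + (4) * μ₁ ^ 7 * μ₂ ^ 14 * r + (-24) * μ₁ ^ 7 * μ₂ ^ 13 * r ^ 4 + (74) * μ₁ ^ 7 * μ₂ ^ 13 * r ^ 3 + (-78) * μ₁ ^ 7 * μ₂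 ^ 13 * r ^ 2 + (32) * μ₁ ^ 7 * μ₂ ^ 13 * r + (-4) * μ₁ ^ 7 * μ₂ ^ 13 + (-19) * μ₁ ^ 7 * μ₂ ^ 12 * r ^ 2 + (28) * μ₁ ^ 7 * μ₂ ^ 12 * r + (-8) * μ₁ ^ 7 * μ₂ ^ 12 + (-4) * μ₁ ^ 7 * μ₂ ^ 11 + (12) * μ₁ ^ 6 * μ₂ ^ 12 * r ^ 3 + (-28) * μ₁ ^ 6 * μ₂ ^ 12 * r ^ 2 + (16) * μ₁ ^ 6 * μ₂ ^ 12 * r + (16) * μ₁ ^ 6 * μ₂ ^ 11 * r + (-16) * μ₁ ^ 6 * μ₂ ^ 11 + (-4) * μ₁ ^ 5 * μ₂ ^ 10) =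
        ((2) * μ₁ ^ 3 * μ₂ ^ 6 * r + (-2) * μ₁ ^ 3 * μ₂ ^ 6 + (2) * μ₁ ^ 3 * μ₂ ^ 5) ^ 2 * (-((-3) * μ₁ ^ 2 * μ₂ ^ 4 * r ^ 2 + (4) * μ₁ ^ 2 * μ₂ ^ 4 * r + (-4) * μ₁ ^ 2 * μ₂ ^ 3)) + (((-1) * μ₁ * μ₂ ^ 2 * r + (2) * μ₁ * μ₂ ^ 2) * ((2) * μ₁ ^ 3 * μ₂ ^ 6 * r + (-2) * μ₁ ^ 3 * μ₂ ^ 6 + (2) * μ₁ ^ 3 * μ₂ ^ 5) - 2 * (-(μ₁ * μ₂ ^ 2)) * ((-3) * μ₁ ^ 3 * μ₂ ^ 6 * r ^ 3 + (8) * μ₁ ^ 3 * μ₂ ^ 6 * r ^ 2 + (-7) * μ₁ ^ 3 * μ₂ ^ 6 * r + (2) * μ₁ ^ 3 * μ₂ ^ 6 + (-3) * μ₁ ^ 3 * μ₂ ^ 5 * r + (2) * μ₁ ^ 3 * μ₂ ^ 5 + (2) * μ₁ ^ 2 * μ₂ ^ 4)) ^ 2 := by ring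
    have hψr : 0 < r * kopelP μ₁ μ₂ r + 2 :=
      aux_caseA hAneg h5 hdiscneg I2 (by positivity) hS
    refine ⟨r, fun x => ⟨fun ⟨hgx, _⟩ => ?_, fun hx => ?_⟩⟩
    · -- uniqueness : r is the only real root
      by_contra hne
      have e0 : kopelG μ₁ μ₂ x = (x - r) * ((-(μ₁ * μ₂ ^ 2)) * x ^ 2 + ((-1) * μ₁ * μ₂ ^ 2 * r + (2) * μ₁ * μ₂ ^ 2) * x + ((-1) * μ₁ * μ₂ ^ 2 * r ^ 2 + (2) * μ₁ * μ₂ ^ 2 * r + (-1) * μ₁ * μ₂ ^ 2 + (-1) * μ₁ * μ₂)) := by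
        simp only [kopelG]; linear_combination hr
      rw [hgx] at e0
      have hqx : (-(μ₁ * μ₂ ^ 2)) * x ^ 2 + ((-1) * μ₁ * μ₂ ^ 2 * r + (2) * μ₁ * μ₂ ^ 2) * x + ((-1) * μ₁ * μ₂ ^ 2 * r ^ 2 + (2) * μ₁ * μ₂ ^ 2 * r + (-1) * μ₁ * μ₂ ^ 2 + (-1) * μ₁ * μ₂) = 0 :=
        (mul_eq_zero.1 e0.symm).resolve_left (sub_ne_zero.2 hne)
      have h4x : 4 * (-(μ₁ * μ₂ ^ 2)) * ((-(μ₁ * μ₂ ^ 2)) * x ^ 2 + ((-1) * μ₁ * μ₂ ^ 2 * r + (2) * μ₁ * μ₂ ^ 2) * x + ((-1) * μ₁ * μ₂ ^ 2 * r ^ 2 + (2) * μ₁ * μ₂ ^ 2 * r + (-1) * μ₁ * μ₂ ^ 2 + (-1) * μ₁ * μ₂)) =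
          (2 * (-(μ₁ * μ₂ ^ 2)) * x + ((-1) * μ₁ * μ₂ ^ 2 * r + (2) * μ₁ * μ₂ ^ 2)) ^ 2 - ((-3) * μ₁ ^ 2 * μ₂ ^ 4 * r ^ 2 + (4) * μ₁ ^ 2 * μ₂ ^ 4 * r + (-4) * μ₁ ^ 2 * μ₂ ^ 3) := by ring
      have := aux_neg hAneg h4x hdiscneg
      rw [hqx] at this
      exact lt_irrefl 0 this
    · subst hx
      exact ⟨hgr, kopel_stable_of hgr hrmem.1 hqr hψr⟩
  · -- Case B : R₁ > 0, S₃ < 0 : three distinct real roots, exactly one stable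
    obtain ⟨hdiscpos, hqrne⟩ := aux_discpos (by positivity) I3 hR
    set s : ℝ := Real.sqrt ((-3) * μ₁ ^ 2 * μ₂ ^ 4 * r ^ 2 + (4) * μ₁ ^ 2 * μ₂ ^ 4 * r + (-4) * μ₁ ^ 2 * μ₂ ^ 3) with hsdef
    have hs2 : s ^ 2 = ((-3) * μ₁ ^ 2 * μ₂ ^ 4 * r ^ 2 + (4) * μ₁ ^ 2 * μ₂ ^ 4 * r + (-4) * μ₁ ^ 2 * μ₂ ^ 3) := Real.sq_sqrt hdiscpos.le
    have hspos : 0 < s := Real.sqrt_pos.2 hdiscpos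
    have h2A0 : 2 * (-(μ₁ * μ₂ ^ 2)) ≠ 0 := by
      intro hh; apply ha; linarith
    have h4A0 : 4 * (-(μ₁ * μ₂ ^ 2)) ≠ 0 := by
      intro hh; apply ha; linarith
    set Tlo : ℝ := (-((-1) * μ₁ * μ₂ ^ 2 * r + (2) * μ₁ * μ₂ ^ 2) + s) / (2 * (-(μ₁ * μ₂ ^ 2))) with hTlodef
    set Thi : ℝ := (-((-1) * μ₁ * μ₂ ^ 2 * r + (2) * μ₁ * μ₂ ^ 2) - s) / (2 * (-(μ₁ * μ₂ ^ 2))) with hThidef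
    have h2lo : 2 * (-(μ₁ * μ₂ ^ 2)) * Tlo + ((-1) * μ₁ * μ₂ ^ 2 * r + (2) * μ₁ * μ₂ ^ 2) = s := by
      rw [hTlodef, mul_div_cancel₀ _ h2A0]; ring
    have h2hi : 2 * (-(μ₁ * μ₂ ^ 2)) * Thi + ((-1) * μ₁ * μ₂ ^ 2 * r + (2) * μ₁ * μ₂ ^ 2) = -s := by
      rw [hThidef, mul_div_cancel₀ _ h2A0]; ring
    have hsum : (-(μ₁ * μ₂ ^ 2)) * (Tlo + Thi) = -((-1) * μ₁ * μ₂ ^ 2 * r + (2) * μ₁ * μ₂ ^ 2) := by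
      linear_combination ((1:ℝ)/2) * h2lo + ((1:ℝ)/2) * h2hi
    have haTT : (-(μ₁ * μ₂ ^ 2)) * (Tlo - Thi) = s := by
      linear_combination ((1:ℝ)/2) * h2lo - ((1:ℝ)/2) * h2hi
    have hmulT : (2 * (-(μ₁ * μ₂ ^ 2)) * Tlo + ((-1) * μ₁ * μ₂ ^ 2 * r + (2) * μ₁ * μ₂ ^ 2)) * (2 * (-(μ₁ * μ₂ ^ 2)) * Thi + ((-1) * μ₁ * μ₂ ^ 2 * r + (2) * μ₁ * μ₂ ^ 2)) = -(s ^ 2) := by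
      rw [h2lo, h2hi]; ring
    have hprodT : (-(μ₁ * μ₂ ^ 2)) * (Tlo * Thi) = ((-1) * μ₁ * μ₂ ^ 2 * r ^ 2 + (2) * μ₁ * μ₂ ^ 2 * r + (-1) * μ₁ * μ₂ ^ 2 + (-1) * μ₁ * μ₂) := by
      have h4A : 4 * (-(μ₁ * μ₂ ^ 2)) * ((-(μ₁ * μ₂ ^ 2)) * (Tlo * Thi) - ((-1) * μ₁ * μ₂ ^ 2 * r ^ 2 + (2) * μ₁ * μ₂ ^ 2 * r + (-1) * μ₁ * μ₂ ^ 2 + (-1) * μ₁ * μ₂)) = 0 := by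
        linear_combination hmulT - hs2 - 2 * ((-1) * μ₁ * μ₂ ^ 2 * r + (2) * μ₁ * μ₂ ^ 2) * hsum
      have := (mul_eq_zero.1 h4A).resolve_left h4A0
      linarith
    have hqlo : (-(μ₁ * μ₂ ^ 2)) * Tlo ^ 2 + ((-1) * μ₁ * μ₂ ^ 2 * r + (2) * μ₁ * μ₂ ^ 2) * Tlo + ((-1) * μ₁ * μ₂ ^ 2 * r ^ 2 + (2) * μ₁ * μ₂ ^ 2 * r + (-1) * μ₁ * μ₂ ^ 2 + (-1) * μ₁ * μ₂) = 0 := by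
      have h4 : 4 * (-(μ₁ * μ₂ ^ 2)) * ((-(μ₁ * μ₂ ^ 2)) * Tlo ^ 2 + ((-1) * μ₁ * μ₂ ^ 2 * r + (2) * μ₁ * μ₂ ^ 2) * Tlo + ((-1) * μ₁ * μ₂ ^ 2 * r ^ 2 + (2) * μ₁ * μ₂ ^ 2 * r + (-1) * μ₁ * μ₂ ^ 2 + (-1) * μ₁ * μ₂)) = 0 := by
        linear_combination (2 * (-(μ₁ * μ₂ ^ 2)) * Tlo + ((-1) * μ₁ * μ₂ ^ 2 * r + (2) * μ₁ * μ₂ ^ 2) + s) * h2lo + hs2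
      exact (mul_eq_zero.1 h4).resolve_left h4A0
    have hqhi : (-(μ₁ * μ₂ ^ 2)) * Thi ^ 2 + ((-1) * μ₁ * μ₂ ^ 2 * r + (2) * μ₁ * μ₂ ^ 2) * Thi + ((-1) * μ₁ * μ₂ ^ 2 * r ^ 2 + (2) * μ₁ * μ₂ ^ 2 * r + (-1) * μ₁ * μ₂ ^ 2 + (-1) * μ₁ * μ₂) = 0 := by
      have h4 : 4 * (-(μ₁ * μ₂ ^ 2)) * ((-(μ₁ * μ₂ ^ 2)) * Thi ^ 2 + ((-1) * μ₁ * μ₂ ^ 2 * r + (2) * μ₁ * μ₂ ^ 2) * Thi + ((-1) * μ₁ * μ₂ ^ 2 * r ^ 2 + (2) * μ₁ * μ₂ ^ 2 * r + (-1) * μ₁ * μ₂ ^ 2 + (-1) * μ₁ * μ₂)) = 0 := by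
        linear_combination (2 * (-(μ₁ * μ₂ ^ 2)) * Thi + ((-1) * μ₁ * μ₂ ^ 2 * r + (2) * μ₁ * μ₂ ^ 2) - s) * h2hi + hs2
      exact (mul_eq_zero.1 h4).resolve_left h4A0
    have hTltT : Tlo < Thi := by
      by_contra hn
      push_neg at hn
      nlinarith [mul_nonneg hM.le (sub_nonneg.2 hn)]
    have hqfac : ∀ x : ℝ, (-(μ₁ * μ₂ ^ 2)) * x ^ 2 + ((-1) * μ₁ * μ₂ ^ 2 * r + (2) * μ₁ * μ₂ ^ 2) * x + ((-1) * μ₁ * μ₂ ^ 2 * r ^ 2 + (2) * μ₁ * μ₂ ^ 2 * r + (-1) * μ₁ * μ₂ ^ 2 + (-1) * μ₁ * μ₂) = (-(μ₁ * μ₂ ^ 2)) * ((x - Tlo) * (x - Thi)) := by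
      intro x
      linear_combination x * hsum - hprodT
    have hgPid : ∀ x : ℝ, kopelP μ₁ μ₂ x =
        ((-(μ₁ * μ₂ ^ 2)) * x ^ 2 + ((-1) * μ₁ * μ₂ ^ 2 * r + (2) * μ₁ * μ₂ ^ 2) * x + ((-1) * μ₁ * μ₂ ^ 2 * r ^ 2 + (2) * μ₁ * μ₂ ^ 2 * r + (-1) * μ₁ * μ₂ ^ 2 + (-1) * μ₁ * μ₂)) + (x - r) * (2 * (-(μ₁ * μ₂ ^ 2)) * x + ((-1) * μ₁ * μ₂ ^ 2 * r + (2) * μ₁ * μ₂ ^ 2)) := by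
      intro x; simp only [kopelP]; ring
    have hdr : kopelP μ₁ μ₂ r = (-(μ₁ * μ₂ ^ 2)) * ((r - Tlo) * (r - Thi)) := by
      rw [hgPid r, hqfac r]; ring
    have hdlo : kopelP μ₁ μ₂ Tlo = (-(μ₁ * μ₂ ^ 2)) * ((Tlo - r) * (Tlo - Thi)) := by
      rw [hgPid Tlo, hqlo, h2lo]
      linear_combination -(Tlo - r) * haTT
    have hdhi : kopelP μ₁ μ₂ Thi = (-(μ₁ * μ₂ ^ 2)) * ((Thi - r) * (Thi - Tlo)) := by
      rw [hgPid Thi, hqhi, h2hi]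
      linear_combination (Thi - r) * haTT
    have hglo : kopelG μ₁ μ₂ Tlo = 0 := by
      simp only [kopelG]; linear_combination hr + (Tlo - r) * hqlo
    have hghi : kopelG μ₁ μ₂ Thi = 0 := by
      simp only [kopelG]; linear_combination hr + (Thi - r) * hqhi
    have hroots : ∀ x, kopelG μ₁ μ₂ x = 0 → x = r ∨ x = Tlo ∨ x = Thi := by
      intro x hx
      have e0 : kopelG μ₁ μ₂ x = (x - r) * ((-(μ₁ * μ₂ ^ 2)) * x ^ 2 + ((-1) * μ₁ * μ₂ ^ 2 * r + (2) * μ₁ * μ₂ ^ 2) * x + ((-1) * μ₁ * μ₂ ^ 2 * r ^ 2 + (2) * μ₁ * μ₂ ^ 2 * r + (-1) * μ₁ * μ₂ ^ 2 + (-1) * μ₁ * μ₂)) := by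
        simp only [kopelG]; linear_combination hr
      rw [hqfac x, hx] at e0
      rcases mul_eq_zero.1 e0.symm with h1 | h1
      · exact Or.inl (sub_eq_zero.1 h1)
      · rcases mul_eq_zero.1 ((mul_eq_zero.1 h1).resolve_left ha) with h2 | h2
        · exact Or.inr (Or.inl (sub_eq_zero.1 h2))
        · exact Or.inr (Or.inr (sub_eq_zero.1 h2))
    have e1 : (μ₁ * μ₂ ^ 2) ^ 2 * (Tlo * kopelP μ₁ μ₂ Tlo + 2) = ((2) * μ₁ ^ 3 * μ₂ ^ 6 * r + (-2) * μ₁ ^ 3 * μ₂ ^ 6 + (2) * μ₁ ^ 3 * μ₂ ^ 5) * Tlo + ((-3) * μ₁ ^ 3 * μ₂ ^ 6 * r ^ 3 + (8) * μ₁ ^ 3 * μ₂ ^ 6 * r ^ 2 + (-7) * μ₁ ^ 3 * μ₂ ^ 6 * r + (2) * μ₁ ^ 3 * μ₂ ^ 6 + (-3) * μ₁ ^ 3 * μ₂ ^ 5 * r + (2) * μ₁ ^ 3 * μ₂ ^ 5 + (2) * μ₁ ^ 2 * μ₂ ^ 4) := by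
      simp only [kopelP]
      linear_combination ((-3) * μ₁ ^ 2 * μ₂ ^ 4 * r + (3) * μ₁ ^ 2 * μ₂ ^ 4 * Tlo + (2) * μ₁ ^ 2 * μ₂ ^ 4) * hqlo
    have e2 : (μ₁ * μ₂ ^ 2) ^ 2 * (Thi * kopelP μ₁ μ₂ Thi + 2) = ((2) * μ₁ ^ 3 * μ₂ ^ 6 * r + (-2) * μ₁ ^ 3 * μ₂ ^ 6 + (2) * μ₁ ^ 3 * μ₂ ^ 5) * Thi + ((-3) * μ₁ ^ 3 * μ₂ ^ 6 * r ^ 3 + (8) * μ₁ ^ 3 * μ₂ ^ 6 * r ^ 2 + (-7) * μ₁ ^ 3 * μ₂ ^ 6 * r + (2) * μ₁ ^ 3 * μ₂ ^ 6 + (-3) * μ₁ ^ 3 * μ₂ ^ 5 * r + (2) * μ₁ ^ 3 * μ₂ ^ 5 + (2) * μ₁ ^ 2 * μ₂ ^ 4) := by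
      simp only [kopelP]
      linear_combination ((-3) * μ₁ ^ 2 * μ₂ ^ 4 * r + (3) * μ₁ ^ 2 * μ₂ ^ 4 * Thi + (2) * μ₁ ^ 2 * μ₂ ^ 4) * hqhi
    have eV : (-(μ₁ * μ₂ ^ 2)) * ((((2) * μ₁ ^ 3 * μ₂ ^ 6 * r + (-2) * μ₁ ^ 3 * μ₂ ^ 6 + (2) * μ₁ ^ 3 * μ₂ ^ 5) * Tlo + ((-3) * μ₁ ^ 3 * μ₂ ^ 6 * r ^ 3 + (8) * μ₁ ^ 3 * μ₂ ^ 6 * r ^ 2 + (-7) * μ₁ ^ 3 * μ₂ ^ 6 * r + (2) * μ₁ ^ 3 * μ₂ ^ 6 + (-3) * μ₁ ^ 3 * μ₂ ^ 5 * r + (2) * μ₁ ^ 3 * μ₂ ^ 5 + (2) * μ₁ ^ 2 * μ₂ ^ 4)) * (((2) * μ₁ ^ 3 * μ₂ ^ 6 * r + (-2) * μ₁ ^ 3 * μ₂ ^ 6 + (2) * μ₁ ^ 3 * μ₂ ^ 5) * Thi + ((-3) * μ₁ ^ 3 * μ₂ ^ 6 * r ^ 3 + (8) * μ₁ ^ 3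 * μ₂ ^ 6 * r ^ 2 + (-7) * μ₁ ^ 3 * μ₂ ^ 6 * r + (2) * μ₁ ^ 3 * μ₂ ^ 6 + (-3) * μ₁ ^ 3 * μ₂ ^ 5 * r + (2) * μ₁ ^ 3 * μ₂ ^ 5 + (2) * μ₁ ^ 2 * μ₂ ^ 4))) = ((-9) * μ₁ ^ 7 * μ₂ ^ 14 * r ^ 6 + (42) * μ₁ ^ 7 * μ₂ ^ 14 * r ^ 5 + (-76) * μ₁ ^ 7 * μ₂ ^ 14 * r ^ 4 + (66) * μ₁ ^ 7 * μ₂ ^ 14 * r ^ 3 + (-27) * μ₁ ^ 7 * μ₂ ^ 14 * r ^ 2 + (4) * μ₁ ^ 7 * μ₂ ^ 14 * r + (-24) * μ₁ ^ 7 * μ₂ ^ 13 * r ^ 4 + (74) * μ₁ ^ 7 * μ₂ ^ 13 * r ^ 3 + (-78) * μ₁ ^ 7 * μ₂ ^ 13 * r ^ 2 + (32) * μ₁ ^ 7 * μ₂ ^ 13 * r + (-4) * μ₁ ^ 7 * μ₂ ^ 13 + (-19) * μ₁ ^ 7 * μ₂ ^ 12 * r ^ 2 + (28) * μ₁ ^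 7 * μ₂ ^ 12 * r + (-8) * μ₁ ^ 7 * μ₂ ^ 12 + (-4) * μ₁ ^ 7 * μ₂ ^ 11 + (12) * μ₁ ^ 6 * μ₂ ^ 12 * r ^ 3 + (-28) * μ₁ ^ 6 * μ₂ ^ 12 * r ^ 2 + (16) * μ₁ ^ 6 * μ₂ ^ 12 * r + (16) * μ₁ ^ 6 * μ₂ ^ 11 * r + (-16) * μ₁ ^ 6 * μ₂ ^ 11 + (-4) * μ₁ ^ 5 * μ₂ ^ 10) := by
      linear_combination ((2) * μ₁ ^ 3 * μ₂ ^ 6 * r + (-2) * μ₁ ^ 3 * μ₂ ^ 6 + (2) * μ₁ ^ 3 * μ₂ ^ 5) ^ 2 * hprodT + ((2) * μ₁ ^ 3 * μ₂ ^ 6 * r + (-2) * μ₁ ^ 3 * μ₂ ^ 6 + (2) * μ₁ ^ 3 * μ₂ ^ 5) * ((-3) * μ₁ ^ 3 * μ₂ ^ 6 * r ^ 3 + (8) * μ₁ ^ 3 * μ₂ ^ 6 * r ^ 2 + (-7) * μ₁ ^ 3 * μ₂ ^ 6 * r + (2) * μ₁ ^ 3 * μ₂ ^ 6 + (-3) *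 μ₁ ^ 3 * μ₂ ^ 5 * r + (2) * μ₁ ^ 3 * μ₂ ^ 5 + (2) * μ₁ ^ 2 * μ₂ ^ 4) * hsum
    have h5 : (-(μ₁ * μ₂ ^ 2)) ^ 5 * ((Tlo * kopelP μ₁ μ₂ Tlo + 2) * (Thi * kopelP μ₁ μ₂ Thi + 2)) = ((-9) * μ₁ ^ 7 * μ₂ ^ 14 * r ^ 6 + (42) * μ₁ ^ 7 * μ₂ ^ 14 * r ^ 5 + (-76) * μ₁ ^ 7 * μ₂ ^ 14 * r ^ 4 + (66) * μ₁ ^ 7 * μ₂ ^ 14 * r ^ 3 + (-27) * μ₁ ^ 7 * μ₂ ^ 14 * r ^ 2 + (4) * μ₁ ^ 7 * μ₂ ^ 14 * r + (-24) * μ₁ ^ 7 * μ₂ ^ 13 * r ^ 4 + (74) * μ₁ ^ 7 * μ₂ ^ 13 * r ^ 3 + (-78) * μ₁ ^ 7 * μ₂ ^ 13 * r ^ 2 + (32) * μ₁ ^ 7 * μ₂ ^ 13 * r + (-4) * μ₁ ^ 7 * μ₂ ^ 13 + (-19) * μ₁ ^ 7 * μ₂ ^ 12 * r ^ 2 + (28)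 * μ₁ ^ 7 * μ₂ ^ 12 * r + (-8) * μ₁ ^ 7 * μ₂ ^ 12 + (-4) * μ₁ ^ 7 * μ₂ ^ 11 + (12) * μ₁ ^ 6 * μ₂ ^ 12 * r ^ 3 + (-28) * μ₁ ^ 6 * μ₂ ^ 12 * r ^ 2 + (16) * μ₁ ^ 6 * μ₂ ^ 12 * r + (16) * μ₁ ^ 6 * μ₂ ^ 11 * r + (-16) * μ₁ ^ 6 * μ₂ ^ 11 + (-4) * μ₁ ^ 5 * μ₂ ^ 10) := by
      have harr : (-(μ₁ * μ₂ ^ 2)) ^ 5 * ((Tlo * kopelP μ₁ μ₂ Tlo + 2) * (Thi * kopelP μ₁ μ₂ Thi + 2)) =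
          (-(μ₁ * μ₂ ^ 2)) * (((μ₁ * μ₂ ^ 2) ^ 2 * (Tlo * kopelP μ₁ μ₂ Tlo + 2)) *
            ((μ₁ * μ₂ ^ 2) ^ 2 * (Thi * kopelP μ₁ μ₂ Thi + 2))) := by ring
      rw [harr, e1, e2, eV]
    have eprod : (r * kopelP μ₁ μ₂ r + 2) *
        ((Tlo * kopelP μ₁ μ₂ Tlo + 2) * (Thi * kopelP μ₁ μ₂ Thi + 2)) = (μ₁ ^ 3 * μ₂ ^ 3 - 4 * μ₁ ^ 3 * μ₂ ^ 2 - 4 * μ₁ ^ 2 * μ₂ ^ 3 + 15 * μ₁ ^ 2 * μ₂ ^ 2 + 12 * μ₁ ^ 2 * μ₂ + 12 * μ₁ * μ₂ ^ 2 - 85 * μ₁ * μ₂ + 125) := by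
      have hcan : (-(μ₁ * μ₂ ^ 2)) ^ 5 * ((r * kopelP μ₁ μ₂ r + 2) *
          ((Tlo * kopelP μ₁ μ₂ Tlo + 2) * (Thi * kopelP μ₁ μ₂ Thi + 2))) = (-(μ₁ * μ₂ ^ 2)) ^ 5 * (μ₁ ^ 3 * μ₂ ^ 3 - 4 * μ₁ ^ 3 * μ₂ ^ 2 - 4 * μ₁ ^ 2 * μ₂ ^ 3 + 15 * μ₁ ^ 2 * μ₂ ^ 2 + 12 * μ₁ ^ 2 * μ₂ + 12 * μ₁ * μ₂ ^ 2 - 85 * μ₁ * μ₂ + 125) := by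
        calc (-(μ₁ * μ₂ ^ 2)) ^ 5 * ((r * kopelP μ₁ μ₂ r + 2) *
            ((Tlo * kopelP μ₁ μ₂ Tlo + 2) * (Thi * kopelP μ₁ μ₂ Thi + 2)))
            = (r * kopelP μ₁ μ₂ r + 2) *
              ((-(μ₁ * μ₂ ^ 2)) ^ 5 * ((Tlo * kopelP μ₁ μ₂ Tlo + 2) * (Thi * kopelP μ₁ μ₂ Thi + 2))) := by ring
          _ = (r * kopelP μ₁ μ₂ r + 2) * ((-9) * μ₁ ^ 7 * μ₂ ^ 14 * r ^ 6 + (42) * μ₁ ^ 7 * μ₂ ^ 14 * r ^ 5 + (-76) * μ₁ ^ 7 * μ₂ ^ 14 * r ^ 4 + (66) * μ₁ ^ 7 * μ₂ ^ 14 * r ^ 3 + (-27) * μ₁ ^ 7 * μ₂ ^ 14 * r ^ 2 + (4) * μ₁ ^ 7 * μ₂ ^ 14 * r + (-24) * μ₁ ^ 7 * μ₂ ^ 13 * r ^ 4 + (74) * μ₁ ^ 7 * μ₂ ^ 13 * r ^ 3 + (-78) * μ₁ ^ 7 * μ₂ ^ 13 * r ^ 2 + (32) * μ₁ ^ 7 *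 μ₂ ^ 13 * r + (-4) * μ₁ ^ 7 * μ₂ ^ 13 + (-19) * μ₁ ^ 7 * μ₂ ^ 12 * r ^ 2 + (28) * μ₁ ^ 7 * μ₂ ^ 12 * r + (-8) * μ₁ ^ 7 * μ₂ ^ 12 + (-4) * μ₁ ^ 7 * μ₂ ^ 11 + (12) * μ₁ ^ 6 * μ₂ ^ 12 * r ^ 3 + (-28) * μ₁ ^ 6 * μ₂ ^ 12 * r ^ 2 + (16) * μ₁ ^ 6 * μ₂ ^ 12 * r + (16) * μ₁ ^ 6 * μ₂ ^ 11 * r + (-16) * μ₁ ^ 6 * μ₂ ^ 11 + (-4) * μ₁ ^ 5 * μ₂ ^ 10) := by rw [h5]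
          _ = -(μ₁ ^ 5 * μ₂ ^ 10) * (μ₁ ^ 3 * μ₂ ^ 3 - 4 * μ₁ ^ 3 * μ₂ ^ 2 - 4 * μ₁ ^ 2 * μ₂ ^ 3 + 15 * μ₁ ^ 2 * μ₂ ^ 2 + 12 * μ₁ ^ 2 * μ₂ + 12 * μ₁ * μ₂ ^ 2 - 85 * μ₁ * μ₂ + 125) := I2
          _ = (-(μ₁ * μ₂ ^ 2)) ^ 5 * (μ₁ ^ 3 * μ₂ ^ 3 - 4 * μ₁ ^ 3 * μ₂ ^ 2 - 4 * μ₁ ^ 2 * μ₂ ^ 3 + 15 * μ₁ ^ 2 * μ₂ ^ 2 + 12 * μ₁ ^ 2 * μ₂ + 12 * μ₁ * μ₂ ^ 2 - 85 * μ₁ * μ₂ + 125) := by ring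
      exact mul_left_cancel₀ (pow_ne_zero 5 ha) hcan
    have hrTlo : r ≠ Tlo := by
      intro hh; apply hqrne; rw [hdr, hh]; ring
    have hrThi : r ≠ Thi := by
      intro hh; apply hqrne; rw [hdr, hh]; ring
    rcases lt_trichotomy r Tlo with h1 | h1 | h1
    · refine kopel_helperB hμ₁ hμ₂ hmm hgr hglo hghi h1 hTltT hdr hdlo hdhi hroots ?_
      rw [eprod]; exact hS
    · exact absurd h1 hrTlo
    · rcases lt_trichotomy r Thi with h2 | h2 | h2
      · refine kopel_helperB hμ₁ hμ₂ hmm hglo hgr hghi h1 h2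
          (by linear_combination hdlo) (by linear_combination hdr) (by linear_combination hdhi)
          (fun x hx => by rcases hroots x hx with hh | hh | hh <;> tauto) ?_
        have heq : (Tlo * kopelP μ₁ μ₂ Tlo + 2) *
            ((r * kopelP μ₁ μ₂ r + 2) * (Thi * kopelP μ₁ μ₂ Thi + 2)) = (μ₁ ^ 3 * μ₂ ^ 3 - 4 * μ₁ ^ 3 * μ₂ ^ 2 - 4 * μ₁ ^ 2 * μ₂ ^ 3 + 15 * μ₁ ^ 2 * μ₂ ^ 2 + 12 * μ₁ ^ 2 * μ₂ + 12 * μ₁ * μ₂ ^ 2 - 85 * μ₁ * μ₂ + 125) := by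
          linear_combination eprod
        rw [heq]; exact hS
      · exact absurd h2 hrThi
      · refine kopel_helperB hμ₁ hμ₂ hmm hglo hghi hgr hTltT h2
          (by linear_combination hdlo) (by linear_combination hdhi) (by linear_combination hdr)
          (fun x hx => by rcases hroots x hx with hh | hh | hh <;> tauto) ?_
        have heq : (Tlo * kopelP μ₁ μ₂ Tlo + 2) *
            ((Thi * kopelP μ₁ μ₂ Thi + 2) * (r * kopelP μ₁ μ₂ r + 2)) = (μ₁ ^ 3 * μ₂ ^ 3 - 4 * μ₁ ^ 3 * μ₂ ^ 2 - 4 * μ₁ ^ 2 * μ₂ ^ 3 + 15 * μ₁ ^ 2 * μ₂ ^ 2 + 12 * μ₁ ^ 2 * μ₂ + 12 * μ₁ * μ₂ ^ 2 - 85 * μ₁ * μ₂ + 125) := by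
          linear_combination eprod
        rw [heq]; exact hS

private lemma kopel_spec_abs_iff (β₁ β₂ : ℝ) :
    (∀ lam ∈ spectrum ℂ (!![(0:ℂ), (β₁:ℂ); (β₂:ℂ), (0:ℂ)] : Matrix (Fin 2) (Fin 2) ℂ),
      ‖lam‖ < 1) ↔ |β₁ * β₂| < 1 := by
  have hmem : ∀ lam : ℂ, lam ∈ spectrum ℂ
      (!![(0:ℂ), (β₁:ℂ); (β₂:ℂ), (0:ℂ)] : Matrix (Fin 2) (Fin 2) ℂ) ↔
      lam ^ 2 = (β₁:ℂ) * (β₂:ℂ) := by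
    intro lam
    rw [spectrum.mem_iff, Matrix.isUnit_iff_isUnit_det, isUnit_iff_ne_zero]
    constructor
    · intro hl
      push_neg at hl
      simp [Matrix.det_fin_two, Matrix.algebraMap_eq_diagonal] at hl
      linear_combination hl
    · intro hl
      simp only [ne_eq, not_not]
      simp [Matrix.det_fin_two, Matrix.algebraMap_eq_diagonal]
      linear_combination hl
  constructor
  · intro hall
    obtain ⟨z, hz⟩ : ∃ z : ℂ, z ^ 2 = (β₁:ℂ) * (β₂:ℂ) := by
      refine ⟨((β₁:ℂ) * (β₂:ℂ)) ^ ((2:ℕ):ℂ)⁻¹, ?_⟩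
      exact_mod_cast Complex.cpow_nat_inv_pow _ (by norm_num)
    have hz' := hall z ((hmem z).2 hz)
    have habs : ‖z‖ ^ 2 = |β₁ * β₂| := by
      rw [← Real.norm_eq_abs, ← Complex.norm_real]; push_cast
      rw [← hz, norm_pow]
    nlinarith [norm_nonneg z]
  · intro hlt lam hl
    have h2 := (hmem lam).1 hl
    have habs : ‖lam‖ ^ 2 = |β₁ * β₂| := by
      rw [← Real.norm_eq_abs, ← Complex.norm_real]; push_cast
      rw [← h2, norm_pow]
    nlinarith [norm_nonneg lam]

/-- Case `ρ₁ = ρ₂ = 1`: if `μ₁ μ₂ > 1`, and either (`R₁ < 0` and `S₃ > 0`) or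
(`R₁ > 0` and `S₃ < 0`), then Kopel's model has exactly one stable positive
equilibrium. -/
theorem kopel_one_stable_positive_equilibrium (μ₁ μ₂ : ℝ) (hμ₁ : 0 < μ₁) (hμ₂ : 0 < μ₂)
    (h : (1 < μ₁ * μ₂ ∧
          μ₁ ^ 2 * μ₂ ^ 2 - 4 * μ₁ ^ 2 * μ₂ - 4 * μ₁ * μ₂ ^ 2 + 18 * μ₁ * μ₂ - 27 < 0 ∧
          0 < μ₁ ^ 3 * μ₂ ^ 3 - 4 * μ₁ ^ 3 * μ₂ ^ 2 - 4 * μ₁ ^ 2 * μ₂ ^ 3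
            + 15 * μ₁ ^ 2 * μ₂ ^ 2 + 12 * μ₁ ^ 2 * μ₂ + 12 * μ₁ * μ₂ ^ 2
            - 85 * μ₁ * μ₂ + 125) ∨
        (1 < μ₁ * μ₂ ∧
          0 < μ₁ ^ 2 * μ₂ ^ 2 - 4 * μ₁ ^ 2 * μ₂ - 4 * μ₁ * μ₂ ^ 2 + 18 * μ₁ * μ₂ - 27 ∧
          μ₁ ^ 3 * μ₂ ^ 3 - 4 * μ₁ ^ 3 * μ₂ ^ 2 - 4 * μ₁ ^ 2 * μ₂ ^ 3
            + 15 * μ₁ ^ 2 * μ₂ ^ 2 + 12 * μ₁ ^ 2 * μ₂ + 12 * μ₁ * μ₂ ^ 2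
            - 85 * μ₁ * μ₂ + 125 < 0)) :
    ({p : ℝ × ℝ | p.1 = μ₁ * p.2 * (1 - p.2) ∧ p.2 = μ₂ * p.1 * (1 - p.1) ∧
        0 < p.1 ∧ 0 < p.2 ∧
        ∀ lam ∈ spectrum ℂ
          (!![(0 : ℂ), ((μ₁ * (1 - 2 * p.2) : ℝ) : ℂ);
              ((μ₂ * (1 - 2 * p.1) : ℝ) : ℂ), (0 : ℂ)] : Matrix (Fin 2) (Fin 2) ℂ),
          ‖lam‖ < 1}).ncard = 1 := by
  have hmm : 1 < μ₁ * μ₂ := by rcases h with ⟨h1, _, _⟩ | ⟨h1, _, _⟩ <;> exact h1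
  obtain ⟨x₀, hx₀⟩ := kopel_key μ₁ μ₂ hμ₁ hμ₂ (by tauto)
  have hset : {p : ℝ × ℝ | p.1 = μ₁ * p.2 * (1 - p.2) ∧ p.2 = μ₂ * p.1 * (1 - p.1) ∧
      0 < p.1 ∧ 0 < p.2 ∧
      ∀ lam ∈ spectrum ℂ
        (!![(0 : ℂ), ((μ₁ * (1 - 2 * p.2) : ℝ) : ℂ);
            ((μ₂ * (1 - 2 * p.1) : ℝ) : ℂ), (0 : ℂ)] : Matrix (Fin 2) (Fin 2) ℂ),
        ‖lam‖ < 1} = {(x₀, μ₂ * x₀ * (1 - x₀))} := by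
    ext ⟨x, y⟩
    simp only [Set.mem_setOf_eq, Set.mem_singleton_iff, Prod.mk.injEq]
    constructor
    · rintro ⟨hx, hy, hx0, hy0, heig⟩
      subst hy
      have hgx : kopelG μ₁ μ₂ x = 0 := by
        have hxg : kopelG μ₁ μ₂ x * x = 0 := by
          simp only [kopelG]
          linear_combination -hx
        exact (mul_eq_zero.1 hxg).resolve_right (ne_of_gt hx0)
      have heig' : |kopelH μ₁ μ₂ x| < 1 := by
        have h1 := (kopel_spec_abs_iff (μ₁ * (1 - 2 * (μ₂ * x * (1 - x)))) (μ₂ * (1 - 2 * x))).1 heig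
        have h2 : kopelH μ₁ μ₂ x
            = μ₁ * (1 - 2 * (μ₂ * x * (1 - x))) * (μ₂ * (1 - 2 * x)) := by
          simp only [kopelH]; ring
        rw [h2]; exact h1
      have hxx := (hx₀ x).1 ⟨hgx, heig'⟩
      exact ⟨hxx, by rw [hxx]⟩
    · rintro ⟨hxe, hye⟩
      have hy' : y = μ₂ * x * (1 - x) := by rw [hxe]; exact hye
      subst hy'
      obtain ⟨hg, hs⟩ := (hx₀ x).2 hxe
      obtain ⟨h0, h1⟩ := kopel_root_bounds hμ₁ hμ₂ hmm hg
      have hy0 : 0 < μ₂ * x * (1 - x) := mul_pos (mul_pos hμ₂ h0) (by linarith)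
      refine ⟨?_, rfl, h0, hy0, ?_⟩
      · have hgg := hg
        simp only [kopelG] at hgg
        linear_combination -x * hgg
      · refine (kopel_spec_abs_iff (μ₁ * (1 - 2 * (μ₂ * x * (1 - x)))) (μ₂ * (1 - 2 * x))).2 ?_
        have h2 : kopelH μ₁ μ₂ x
            = μ₁ * (1 - 2 * (μ₂ * x * (1 - x))) * (μ₂ * (1 - 2 * x)) := by
          simp only [kopelH]; ring
        rw [← h2]; exact hs
  rw [hset, Set.ncard_singleton]
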